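/- If G is a 2-regular graph, then α(G) ≤ (3/2)·γ(G), i.e., 2·α(G) ≤ 3·γ(G). -/
import Mathlib


open Finset

variable {V : Type*}

/-- A finset is independent in `G` : no two of its vertices are adjacent. -/
def IsIndepFinset (G : SimpleGraph V) (S : Finset V) : Prop :=
  ∀ u ∈ S, ∀ v ∈ S, ¬ G.Adj u v

/-- A finset dominates `G` : every vertex outside it has a neighbour inside it. -/
def IsDomFinset (G : SimpleGraph V) (D : Finset V) : Prop :=
  ∀ v, v ∉ D → ∃ u ∈ D, G.Adj u v

/-- The independence number of `G`. -/
noncomputable def indepNum [Fintype V] (G : SimpleGraph V) : ℕ :=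
  sSup {n | ∃ S : Finset V, IsIndepFinset G S ∧ S.card = n}

/-- The domination number of `G`. -/
noncomputable def domNum [Fintype V] (G : SimpleGraph V) : ℕ :=
  sInf {n | ∃ D : Finset V, IsDomFinset G D ∧ D.card = n}

/-- `G` is `K_{1,r}`-free: no vertex has `r` pairwise nonadjacent neighbours. -/
def K1rFree (G : SimpleGraph V) (r : ℕ) : Prop :=
  ¬ ∃ (v : V) (A : Finset V), (∀ a ∈ A, G.Adj v a) ∧
      (∀ a ∈ A, ∀ b ∈ A, a ≠ b → ¬ G.Adj a b) ∧ A.card = r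

lemma indep_bound [Fintype V] (G : SimpleGraph V) [DecidableRel G.Adj]
    (hreg : G.IsRegularOfDegree 2) {S : Finset V} (hS : IsIndepFinset G S) :
    2 * S.card ≤ Fintype.card V := by
  classical
  have key : ∑ s ∈ S, ((univ \ S).filter (fun v => G.Adj s v)).card
      = ∑ v ∈ univ \ S, (S.filter (fun s => G.Adj s v)).card := by
    simp only [Finset.card_filter]
    rw [Finset.sum_comm]
  have h1 : ∀ s ∈ S, ((univ \ S).filter (fun v => G.Adj s v)).card = 2 := by
    intro s hs
    have he : (univ \ S).filter (fun v => G.Adj s v) = G.neighborFinset s := by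
      ext v
      simp only [mem_filter, mem_sdiff, mem_univ, true_and,
        SimpleGraph.mem_neighborFinset]
      constructor
      · rintro ⟨-, h⟩; exact h
      · intro h; exact ⟨fun hv => hS s hs v hv h, h⟩
    rw [he, SimpleGraph.card_neighborFinset_eq_degree]
    exact hreg s
  have h2 : ∀ v ∈ univ \ S, (S.filter (fun s => G.Adj s v)).card ≤ 2 := by
    intro v _
    have hsub : S.filter (fun s => G.Adj s v) ⊆ G.neighborFinset v := by
      intro s hsv
      rw [SimpleGraph.mem_neighborFinset]
      exact ((mem_filter.mp hsv).2).symm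
    calc (S.filter (fun s => G.Adj s v)).card ≤ (G.neighborFinset v).card :=
          card_le_card hsub
      _ = 2 := by rw [SimpleGraph.card_neighborFinset_eq_degree]; exact hreg v
  have hL : ∑ s ∈ S, ((univ \ S).filter (fun v => G.Adj s v)).card = 2 * S.card := by
    rw [Finset.sum_congr rfl h1]; simp [mul_comm]
  have hR : ∑ v ∈ univ \ S, (S.filter (fun s => G.Adj s v)).card ≤ 2 * (univ \ S).card := by
    calc ∑ v ∈ univ \ S, (S.filter (fun s => G.Adj s v)).card
        ≤ ∑ _v ∈ univ \ S, 2 := Finset.sum_le_sum h2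
      _ = 2 * (univ \ S).card := by simp [mul_comm]
  have hcard : (univ \ S).card = Fintype.card V - S.card := by
    rw [card_sdiff_of_subset (subset_univ S), card_univ]
  have hle : S.card ≤ Fintype.card V := by
    rw [← card_univ]; exact card_le_card (subset_univ S)
  omega

lemma dom_bound [Fintype V] (G : SimpleGraph V) [DecidableRel G.Adj]
    (hreg : G.IsRegularOfDegree 2) {D : Finset V} (hD : IsDomFinset G D) :
    Fintype.card V ≤ 3 * D.card := by
  classical
  have hsub : (univ : Finset V) ⊆ D ∪ D.biUnion (fun d => G.neighborFinset d) := by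
    intro v _
    by_cases hv : v ∈ D
    · exact mem_union_left _ hv
    · obtain ⟨u, hu, hadj⟩ := hD v hv
      exact mem_union_right _ (mem_biUnion.mpr
        ⟨u, hu, (G.mem_neighborFinset u v).mpr hadj⟩)
  calc Fintype.card V = (univ : Finset V).card := card_univ.symm
    _ ≤ (D ∪ D.biUnion (fun d => G.neighborFinset d)).card := card_le_card hsub
    _ ≤ D.card + (D.biUnion (fun d => G.neighborFinset d)).card := card_union_le _ _
    _ ≤ D.card + ∑ d ∈ D, (G.neighborFinset d).card :=
        Nat.add_le_add_left (card_biUnion_le) _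
    _ = D.card + 2 * D.card := by
        have hs : ∑ d ∈ D, (G.neighborFinset d).card = ∑ _d ∈ D, 2 :=
          Finset.sum_congr rfl (fun d _ => by
            rw [SimpleGraph.card_neighborFinset_eq_degree]; exact hreg d)
        rw [hs]; simp [mul_comm]
    _ = 3 * D.card := by ring

/-- A 2-regular graph satisfies 2·α(G) ≤ 3·γ(G). -/
theorem stmt7 [Fintype V] (G : SimpleGraph V) [DecidableRel G.Adj] (hreg : G.IsRegularOfDegree 2) :
    2 * indepNum G ≤ 3 * domNum G := by
  classical
  have hne : {n | ∃ S : Finset V, IsIndepFinset G S ∧ S.card = n}.Nonempty :=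
    ⟨0, ∅, fun u hu => absurd hu (Finset.notMem_empty u), Finset.card_empty⟩
  have hbdd : BddAbove {n | ∃ S : Finset V, IsIndepFinset G S ∧ S.card = n} := by
    refine ⟨Fintype.card V, fun n hn => ?_⟩
    obtain ⟨S, -, rfl⟩ := hn
    rw [← card_univ]; exact card_le_card (subset_univ S)
  have hmemI := Nat.sSup_mem hne hbdd
  obtain ⟨S, hSi, hScard⟩ := hmemI
  have hdne : {n | ∃ D : Finset V, IsDomFinset G D ∧ D.card = n}.Nonempty :=
    ⟨(univ : Finset V).card, univ, fun v hv => absurd (mem_univ v) hv, rfl⟩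
  have hmemD := Nat.sInf_mem hdne
  obtain ⟨D, hDd, hDcard⟩ := hmemD
  have h1 : 2 * indepNum G ≤ Fintype.card V := by
    rw [indepNum, ← hScard]; exact indep_bound G hreg hSi
  have h2 : Fintype.card V ≤ 3 * domNum G := by
    rw [domNum, ← hDcard]; exact dom_bound G hreg hDd
  omega
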